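/- For n ≥ 2, p ∈ (0,1) and all θ ≤ 0, the moment generating function M(θ) = E exp(θ(Y-μ)/σ) of the standardized number of isolated vertices satisfies M(θ) ≤ exp(μθ²/σ²). -/

import Mathlib

open MeasureTheory ProbabilityTheory Real Finset

noncomputable section

namespace ErdosRenyiIsolated

/-- Index set for the potential edges of a graph on `Fin n`. -/
abbrev EdgeIdx (n : ℕ) := {e : Fin n × Fin n // e.1 < e.2}

/-- Adjacency relation of the random graph encoded by `ω` : `u` and `v` are adjacent
if the corresponding edge indicator is `true`. -/
def adj {n : ℕ} (ω : EdgeIdx n → Bool) (u v : Fin n) : Prop :=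
  if h : u < v then ω ⟨(u, v), h⟩ = true
  else if h' : v < u then ω ⟨(v, u), h'⟩ = true
  else False

instance {n : ℕ} (ω : EdgeIdx n → Bool) (u v : Fin n) : Decidable (adj ω u v) := by
  unfold adj
  split
  · exact inferInstance
  · split
    · exact inferInstance
    · exact inferInstance

/-- Degree of vertex `v` in the graph encoded by `ω`. -/
def deg {n : ℕ} (ω : EdgeIdx n → Bool) (v : Fin n) : ℕ :=
  (Finset.univ.filter fun w => adj ω v w).card

/-- The number of isolated vertices of the graph encoded by `ω`. -/
def isolCount {n : ℕ} (ω : EdgeIdx n → Bool) : ℕ :=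
  (Finset.univ.filter fun v => deg ω v = 0).card

/-- The Bernoulli(p) measure on `Bool`. -/
def bern (p : ℝ) : Measure Bool :=
  ENNReal.ofReal p • Measure.dirac true + ENNReal.ofReal (1 - p) • Measure.dirac false

instance (p : ℝ) : IsFiniteMeasure (bern p) := by
  constructor
  have h : bern p Set.univ ≤ ENNReal.ofReal p + ENNReal.ofReal (1 - p) := by
    simp [bern]
  exact lt_of_le_of_lt h (ENNReal.add_lt_top.mpr ⟨ENNReal.ofReal_lt_top, ENNReal.ofReal_lt_top⟩)

/-- The Erdős–Rényi random graph measure `G(n,p)`: the edge indicators are i.i.d.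
Bernoulli(p). -/
def gnp (n : ℕ) (p : ℝ) : Measure (EdgeIdx n → Bool) :=
  Measure.pi fun _ => bern p

/-- The Erdős–Rényi measure together with an independent uniformly chosen vertex. -/
def gnpV (n : ℕ) (p : ℝ) : Measure ((EdgeIdx n → Bool) × Fin n) :=
  (gnp n p).prod (uniformOn (Set.univ : Set (Fin n)))

/-- Adjacency in the graph obtained by deleting all edges incident to `v'`. -/
def adjDel {n : ℕ} (ω : EdgeIdx n → Bool) (v' u v : Fin n) : Prop :=
  adj ω u v ∧ u ≠ v' ∧ v ≠ v'

instance {n : ℕ} (ω : EdgeIdx n → Bool) (v' u v : Fin n) : Decidable (adjDel ω v' u v) := by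
  unfold adjDel; exact inferInstance

/-- Degree of `v` in the graph `ω` with all edges incident to `v'` deleted. -/
def degDel {n : ℕ} (ω : EdgeIdx n → Bool) (v' v : Fin n) : ℕ :=
  (Finset.univ.filter fun w => adjDel ω v' v w).card

/-- Number of isolated vertices in the graph `ω` with all edges incident to `v'` deleted. -/
def isolCountDel {n : ℕ} (ω : EdgeIdx n → Bool) (v' : Fin n) : ℕ :=
  (Finset.univ.filter fun v => degDel ω v' v = 0).card

section Combinatorics

variable {n : ℕ}

lemma adj_symm (ω : EdgeIdx n → Bool) (u v : Fin n) : adj ω u v ↔ adj ω v u := by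
  unfold adj
  rcases lt_trichotomy u v with h | h | h
  · rw [dif_pos h, dif_neg (not_lt.2 h.le), dif_pos h]
  · subst h; simp
  · rw [dif_neg (not_lt.2 h.le), dif_pos h, dif_pos h]

/-- The predicate that an edge is incident to `v`. -/
def incid (v : Fin n) (e : EdgeIdx n) : Prop := e.1.1 = v ∨ e.1.2 = v

instance (v : Fin n) : DecidablePred (incid v) := fun e =>
  inferInstanceAs (Decidable (_ ∨ _))

lemma deg_eq_card (ω : EdgeIdx n → Bool) (v : Fin n) :
    deg ω v = (Finset.univ.filter fun w => adj ω v w).card := rfl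

lemma degDel_eq_card (ω : EdgeIdx n → Bool) (v' v : Fin n) :
    degDel ω v' v = (Finset.univ.filter fun w => adjDel ω v' v w).card := rfl

lemma isolCount_eq_card (ω : EdgeIdx n → Bool) :
    isolCount ω = (Finset.univ.filter fun v => deg ω v = 0).card := rfl

lemma isolCountDel_eq_card (ω : EdgeIdx n → Bool) (v' : Fin n) :
    isolCountDel ω v' = (Finset.univ.filter fun v => degDel ω v' v = 0).card := rfl

lemma deg_eq_zero_iff (ω : EdgeIdx n → Bool) (v : Fin n) :
    deg ω v = 0 ↔ ∀ e : EdgeIdx n, incid v e → ω e = false := by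
  rw [deg_eq_card, Finset.card_eq_zero, Finset.filter_eq_empty_iff]
  constructor
  · intro h e he
    by_contra hne
    rw [Bool.not_eq_false] at hne
    rcases he with h1 | h2
    · apply h (Finset.mem_univ e.1.2)
      have hlt : v < e.1.2 := h1 ▸ e.2
      unfold adj
      rw [dif_pos hlt]
      have he2 : (⟨(v, e.1.2), hlt⟩ : EdgeIdx n) = e := Subtype.ext (Prod.ext h1.symm rfl)
      rw [he2]; exact hne
    · apply h (Finset.mem_univ e.1.1)
      have hlt : e.1.1 < v := h2 ▸ e.2
      unfold adj
      rw [dif_neg (not_lt.2 hlt.le), dif_pos hlt]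
      have he2 : (⟨(e.1.1, v), hlt⟩ : EdgeIdx n) = e := Subtype.ext (Prod.ext rfl h2.symm)
      rw [he2]; exact hne
  · intro h w _
    unfold adj
    split
    · next hlt => simp [h ⟨(v, w), hlt⟩ (Or.inl rfl)]
    · split
      · next hlt => simp [h ⟨(w, v), hlt⟩ (Or.inr rfl)]
      · exact not_false

lemma adj_congr_of_agree {ω ω' : EdgeIdx n → Bool} {v : Fin n}
    (h : ∀ e, ¬ incid v e → ω e = ω' e) {u w : Fin n} (hu : u ≠ v) (hw : w ≠ v) :
    adj ω u w ↔ adj ω' u w := by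
  unfold adj
  split
  · next hlt => rw [h ⟨(u, w), hlt⟩ (by simp [incid, hu, hw])]
  · split
    · next hlt => rw [h ⟨(w, u), hlt⟩ (by simp [incid, hu, hw])]
    · rfl

lemma isolCountDel_congr {ω ω' : EdgeIdx n → Bool} {v : Fin n}
    (h : ∀ e, ¬ incid v e → ω e = ω' e) : isolCountDel ω v = isolCountDel ω' v := by
  have hadj : ∀ u w, adjDel ω v u w ↔ adjDel ω' v u w := by
    intro u w
    unfold adjDel
    by_cases hu : u = v
    · simp [hu]
    · by_cases hw : w = v
      · simp [hw]
      · rw [adj_congr_of_agree h hu hw]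
  have hdeg : ∀ x, degDel ω v x = degDel ω' v x := by
    intro x
    rw [degDel_eq_card, degDel_eq_card]
    apply congrArg
    apply Finset.filter_congr
    intro y _
    exact hadj x y
  rw [isolCountDel_eq_card, isolCountDel_eq_card]
  apply congrArg
  apply Finset.filter_congr
  intro x _
  rw [hdeg x]

lemma isolCount_eq_del {ω : EdgeIdx n → Bool} {v : Fin n}
    (h : ∀ e, incid v e → ω e = false) : isolCount ω = isolCountDel ω v := by
  have hdeg0 : deg ω v = 0 := (deg_eq_zero_iff ω v).2 h
  have hnadj : ∀ w, ¬ adj ω v w := by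
    rw [deg_eq_card, Finset.card_eq_zero, Finset.filter_eq_empty_iff] at hdeg0
    intro w
    exact hdeg0 (Finset.mem_univ w)
  have hadj : ∀ u w, adjDel ω v u w ↔ adj ω u w := by
    intro u w
    unfold adjDel
    constructor
    · exact fun hh => hh.1
    · intro hh
      refine ⟨hh, ?_, ?_⟩
      · intro huv; rw [huv] at hh; exact hnadj w hh
      · intro hwv; rw [hwv] at hh; exact hnadj u ((adj_symm ω u v).1 hh)
  have hdeg : ∀ x, deg ω x = degDel ω v x := by
    intro x
    rw [deg_eq_card, degDel_eq_card]
    apply congrArg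
    apply Finset.filter_congr
    intro y _
    exact (hadj x y).symm
  rw [isolCount_eq_card, isolCountDel_eq_card]
  apply congrArg
  apply Finset.filter_congr
  intro x _
  rw [hdeg x]

lemma isolCount_le_del (ω : EdgeIdx n → Bool) (v : Fin n) :
    isolCount ω ≤ isolCountDel ω v := by
  rw [isolCount_eq_card, isolCountDel_eq_card]
  apply Finset.card_le_card
  intro x hx
  simp only [Finset.mem_filter, Finset.mem_univ, true_and] at hx ⊢
  have hsub : Finset.univ.filter (fun w => adjDel ω v x w)
      ⊆ Finset.univ.filter (fun w => adj ω x w) := by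
    intro y hy
    simp only [Finset.mem_filter, Finset.mem_univ, true_and] at hy ⊢
    exact hy.1
  have hc := Finset.card_le_card hsub
  rw [degDel_eq_card]
  rw [deg_eq_card] at hx
  omega

lemma isolCountDel_le (ω : EdgeIdx n → Bool) (v : Fin n) :
    isolCountDel ω v ≤ isolCount ω + 1
      + (Finset.univ.filter fun w => deg ω w = 1 ∧ adj ω v w).card := by
  rw [isolCountDel_eq_card, isolCount_eq_card]
  have hsub : (Finset.univ.filter fun w => degDel ω v w = 0)
      ⊆ ((Finset.univ.filter fun w => deg ω w = 0) ∪ {v})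
        ∪ (Finset.univ.filter fun w => deg ω w = 1 ∧ adj ω v w) := by
    intro w hw
    simp only [Finset.mem_filter, Finset.mem_univ, true_and] at hw
    simp only [Finset.mem_union, Finset.mem_filter, Finset.mem_univ, true_and,
      Finset.mem_singleton]
    by_cases h0 : deg ω w = 0
    · exact Or.inl (Or.inl h0)
    by_cases hv : w = v
    · exact Or.inl (Or.inr hv)
    right
    have hnbr : ∀ u, adj ω w u → u = v := by
      intro u hu
      by_contra huv
      have hdel : adjDel ω v w u := ⟨hu, hv, huv⟩
      have hmem : u ∈ Finset.univ.filter (fun y => adjDel ω v w y) :=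
        Finset.mem_filter.2 ⟨Finset.mem_univ u, hdel⟩
      rw [degDel_eq_card, Finset.card_eq_zero] at hw
      rw [hw] at hmem
      exact absurd hmem (Finset.notMem_empty u)
    have hsub2 : Finset.univ.filter (fun u => adj ω w u) ⊆ {v} := by
      intro u hu
      simp only [Finset.mem_filter, Finset.mem_univ, true_and] at hu
      simp [hnbr u hu]
    have hd1 : deg ω w = 1 := by
      have hle := Finset.card_le_card hsub2
      simp only [Finset.card_singleton] at hle
      rw [deg_eq_card] at h0 ⊢
      omega
    refine ⟨hd1, ?_⟩
    have hne : (Finset.univ.filter fun u => adj ω w u).Nonempty := by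
      rw [← Finset.card_pos, ← deg_eq_card]
      omega
    obtain ⟨u, hu⟩ := hne
    simp only [Finset.mem_filter, Finset.mem_univ, true_and] at hu
    have huv := hnbr u hu
    rw [huv] at hu
    exact (adj_symm ω w v).1 hu
  calc (Finset.univ.filter fun w => degDel ω v w = 0).card
      ≤ (((Finset.univ.filter fun w => deg ω w = 0) ∪ {v})
        ∪ (Finset.univ.filter fun w => deg ω w = 1 ∧ adj ω v w)).card :=
        Finset.card_le_card hsub
    _ ≤ ((Finset.univ.filter fun w => deg ω w = 0) ∪ {v}).card
        + (Finset.univ.filter fun w => deg ω w = 1 ∧ adj ω v w).card :=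
        Finset.card_union_le _ _
    _ ≤ (Finset.univ.filter fun w => deg ω w = 0).card + 1
        + (Finset.univ.filter fun w => deg ω w = 1 ∧ adj ω v w).card := by
        have hcu := Finset.card_union_le (Finset.univ.filter fun w => deg ω w = 0)
          ({v} : Finset (Fin n))
        simp only [Finset.card_singleton] at hcu
        omega

lemma sum_deg_one_le (ω : EdgeIdx n → Bool) :
    ∑ v : Fin n, (Finset.univ.filter fun w => deg ω w = 1 ∧ adj ω v w).card ≤ n := by
  calc ∑ v : Fin n, (Finset.univ.filter fun w => deg ω w = 1 ∧ adj ω v w).card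
      = ∑ v : Fin n, ∑ w : Fin n, if deg ω w = 1 ∧ adj ω v w then 1 else 0 := by
        exact Finset.sum_congr rfl fun v _ => Finset.card_filter _ _
    _ = ∑ w : Fin n, ∑ v : Fin n, if deg ω w = 1 ∧ adj ω v w then 1 else 0 :=
        Finset.sum_comm
    _ ≤ ∑ _w : Fin n, 1 := by
        apply Finset.sum_le_sum
        intro w _
        by_cases h1 : deg ω w = 1
        · have heq : ∑ v : Fin n, (if deg ω w = 1 ∧ adj ω v w then 1 else 0)
              = ∑ v : Fin n, (if adj ω w v then 1 else 0) := by
            apply Finset.sum_congr rfl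
            intro v _
            simp [h1, adj_symm ω v w]
          rw [heq, ← Finset.card_filter, ← deg_eq_card]
          omega
        · simp [h1]
    _ = n := by simp

lemma sum_isolCountDel_le (ω : EdgeIdx n → Bool) :
    ∑ v : Fin n, isolCountDel ω v ≤ n * isolCount ω + 2 * n := by
  calc ∑ v : Fin n, isolCountDel ω v
      ≤ ∑ v : Fin n, (isolCount ω + 1
          + (Finset.univ.filter fun w => deg ω w = 1 ∧ adj ω v w).card) :=
        Finset.sum_le_sum fun v _ => isolCountDel_le ω v
    _ = n * (isolCount ω + 1)
        + ∑ v : Fin n, (Finset.univ.filter fun w => deg ω w = 1 ∧ adj ω v w).card := by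
        rw [Finset.sum_add_distrib, Finset.sum_const]
        simp [mul_comm]
    _ ≤ n * (isolCount ω + 1) + n := by
        have := sum_deg_one_le ω
        omega
    _ ≤ n * isolCount ω + 2 * n := by ring_nf; omega

end Combinatorics
section Weights

/-- Bernoulli weight of a single edge indicator. -/
def wB (p : ℝ) (b : Bool) : ℝ := if b then p else 1 - p

/-- The probability weight of a graph `ω`. -/
def Wt (p : ℝ) {n : ℕ} (ω : EdgeIdx n → Bool) : ℝ := ∏ e, wB p (ω e)

lemma wB_nonneg {p : ℝ} (hp : p ∈ Set.Ioo (0 : ℝ) 1) (b : Bool) : 0 ≤ wB p b := by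
  cases b <;> simp [wB] <;> [linarith [hp.2]; linarith [hp.1]]

lemma Wt_nonneg {p : ℝ} (hp : p ∈ Set.Ioo (0 : ℝ) 1) {n : ℕ} (ω : EdgeIdx n → Bool) :
    0 ≤ Wt p ω :=
  Finset.prod_nonneg fun e _ => wB_nonneg hp (ω e)

lemma sum_wB {p : ℝ} : wB p true + wB p false = 1 := by simp [wB]

lemma sum_prod_wB {ι : Type} [Fintype ι] [DecidableEq ι] (p : ℝ) :
    ∑ f : ι → Bool, ∏ i, wB p (f i) = 1 := by
  have h := Finset.prod_univ_sum (fun _ : ι => (Finset.univ : Finset Bool))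
    (fun _ b => wB p b)
  rw [Fintype.piFinset_univ] at h
  rw [← h]
  have : ∀ _i : ι, ∑ b : Bool, wB p b = 1 := by
    intro _
    rw [Fintype.sum_bool, sum_wB]
  calc ∏ i : ι, ∑ b : Bool, wB p b = ∏ _i : ι, (1 : ℝ) :=
        Finset.prod_congr rfl fun i _ => this i
    _ = 1 := Finset.prod_const_one

lemma bern_singleton {p : ℝ} (hp : p ∈ Set.Ioo (0 : ℝ) 1) (b : Bool) :
    bern p {b} = ENNReal.ofReal (wB p b) := by
  cases b <;>
    simp [bern, wB, Measure.dirac_apply, Set.indicator]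

lemma bern_isProb {p : ℝ} (hp : p ∈ Set.Ioo (0 : ℝ) 1) :
    IsProbabilityMeasure (bern p) := by
  constructor
  simp only [bern, Measure.add_apply, Measure.smul_apply, Measure.dirac_apply,
    Set.indicator, Set.mem_univ, if_pos, smul_eq_mul, mul_one, Pi.one_apply]
  rw [← ENNReal.ofReal_add (le_of_lt hp.1) (by linarith [hp.2])]
  norm_num

lemma gnp_singleton {n : ℕ} {p : ℝ} (hp : p ∈ Set.Ioo (0 : ℝ) 1) (ω : EdgeIdx n → Bool) :
    gnp n p {ω} = ENNReal.ofReal (Wt p ω) := by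
  have hset : ({ω} : Set (EdgeIdx n → Bool)) = Set.univ.pi (fun e => {ω e}) := by
    ext x
    simp [Set.mem_pi, funext_iff, Set.mem_singleton_iff]
  rw [gnp, hset, Measure.pi_pi]
  rw [Wt, ENNReal.ofReal_prod_of_nonneg fun e _ => wB_nonneg hp (ω e)]
  exact Finset.prod_congr rfl fun e _ => bern_singleton hp (ω e)

lemma gnp_isProb {n : ℕ} {p : ℝ} (hp : p ∈ Set.Ioo (0 : ℝ) 1) :
    IsProbabilityMeasure (gnp n p) := by
  haveI := bern_isProb hp
  exact inferInstanceAs (IsProbabilityMeasure (Measure.pi fun _ : EdgeIdx n => bern p))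

lemma integral_gnp {n : ℕ} {p : ℝ} (hp : p ∈ Set.Ioo (0 : ℝ) 1)
    (f : (EdgeIdx n → Bool) → ℝ) :
    ∫ ω, f ω ∂(gnp n p) = ∑ ω : EdgeIdx n → Bool, Wt p ω * f ω := by
  haveI := gnp_isProb (n := n) hp
  rw [integral_fintype (hf := Integrable.of_finite)]
  refine Finset.sum_congr rfl fun ω _ => ?_
  rw [Measure.real, gnp_singleton hp ω, ENNReal.toReal_ofReal (Wt_nonneg hp ω), smul_eq_mul]

lemma sum_Wt_eq_one {n : ℕ} {p : ℝ} (hp : p ∈ Set.Ioo (0 : ℝ) 1) :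
    ∑ ω : EdgeIdx n → Bool, Wt p ω = 1 := by
  haveI := gnp_isProb (n := n) hp
  have h := integral_gnp (n := n) hp (fun _ => (1 : ℝ))
  simpa using h.symm

end Weights
section Key

lemma card_incid {n : ℕ} (v : Fin n) :
    Fintype.card {e : EdgeIdx n // incid v e} = n - 1 := by
  classical
  rw [Fintype.card_subtype]
  have hbij : (Finset.univ.filter fun e : EdgeIdx n => incid v e).card
      = (Finset.univ.filter fun w : Fin n => w ≠ v).card := by
    apply Finset.card_bij (fun (e : EdgeIdx n) _ => if e.1.1 = v then e.1.2 else e.1.1)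
    · intro e he
      simp only [Finset.mem_filter, Finset.mem_univ, true_and] at he ⊢
      by_cases h : e.1.1 = v
      · rw [if_pos h]
        intro hc
        have hlt := e.2
        rw [h, hc] at hlt
        exact absurd hlt (lt_irrefl v)
      · rw [if_neg h]
        exact h
    · intro a ha b hb hab
      simp only [Finset.mem_filter, Finset.mem_univ, true_and] at ha hb
      by_cases h1 : a.1.1 = v <;> by_cases h2 : b.1.1 = v
      · rw [if_pos h1, if_pos h2] at hab
        exact Subtype.ext (Prod.ext (h1.trans h2.symm) hab)
      · rw [if_pos h1, if_neg h2] at hab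
        have hb2 : b.1.2 = v := hb.resolve_left h2
        have : v < v := by
          calc v = a.1.1 := h1.symm
            _ < a.1.2 := a.2
            _ = b.1.1 := hab
            _ < b.1.2 := b.2
            _ = v := hb2
        exact absurd this (lt_irrefl v)
      · rw [if_neg h1, if_pos h2] at hab
        have ha2 : a.1.2 = v := ha.resolve_left h1
        have : v < v := by
          calc v = b.1.1 := h2.symm
            _ < b.1.2 := b.2
            _ = a.1.1 := hab.symm
            _ < a.1.2 := a.2
            _ = v := ha2
        exact absurd this (lt_irrefl v)
      · rw [if_neg h1, if_neg h2] at hab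
        have ha2 : a.1.2 = v := ha.resolve_left h1
        have hb2 : b.1.2 = v := hb.resolve_left h2
        exact Subtype.ext (Prod.ext hab (ha2.trans hb2.symm))
    · intro w hw
      simp only [Finset.mem_filter, Finset.mem_univ, true_and] at hw
      rcases lt_or_gt_of_ne (Ne.symm hw) with h | h
      · refine ⟨⟨(v, w), h⟩, Finset.mem_filter.2 ⟨Finset.mem_univ _, Or.inl rfl⟩, ?_⟩
        simp
      · refine ⟨⟨(w, v), h⟩, Finset.mem_filter.2 ⟨Finset.mem_univ _, Or.inr rfl⟩, ?_⟩
        simp [hw]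
  rw [hbij, Finset.filter_ne', Finset.card_erase_of_mem (Finset.mem_univ v)]
  simp

set_option maxHeartbeats 2000000 in
lemma key_identity {n : ℕ} {p : ℝ} (hp : p ∈ Set.Ioo (0 : ℝ) 1) (v : Fin n) (F : ℕ → ℝ) :
    ∑ ω : EdgeIdx n → Bool, Wt p ω * (if deg ω v = 0 then F (isolCount ω) else 0)
      = (1 - p) ^ (n - 1)
        * ∑ ω : EdgeIdx n → Bool, Wt p ω * F (isolCountDel ω v) := by
  classical
  set E := Equiv.piEquivPiSubtypeProd (incid v) (fun _ => Bool) with hE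
  have hsum : ∀ G : (EdgeIdx n → Bool) → ℝ,
      ∑ ω : EdgeIdx n → Bool, G ω
        = ∑ a : {e : EdgeIdx n // incid v e} → Bool,
            ∑ b : {e : EdgeIdx n // ¬ incid v e} → Bool, G (E.symm (a, b)) := by
    intro G
    rw [← Equiv.sum_comp E.symm G, Fintype.sum_prod_type]
  have happ : ∀ (a : {e : EdgeIdx n // incid v e} → Bool)
      (b : {e : EdgeIdx n // ¬ incid v e} → Bool) (e : EdgeIdx n),
      E.symm (a, b) e = if h : incid v e then a ⟨e, h⟩ else b ⟨e, h⟩ := by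
    intro a b e
    rw [hE]
    rw [Equiv.piEquivPiSubtypeProd_symm_apply]
  have hW : ∀ a b, Wt p (E.symm (a, b))
      = (∏ i : {e : EdgeIdx n // incid v e}, wB p (a i))
        * (∏ i : {e : EdgeIdx n // ¬ incid v e}, wB p (b i)) := by
    intro a b
    rw [Wt, ← Fintype.prod_subtype_mul_prod_subtype (incid v)
      (fun e => wB p (E.symm (a, b) e))]
    congr 1
    · refine Finset.prod_congr rfl fun i _ => ?_
      rw [happ a b i.1, dif_pos i.2]
    · refine Finset.prod_congr rfl fun i _ => ?_
      rw [happ a b i.1, dif_neg i.2]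
  have hdeg : ∀ a b, (deg (E.symm (a, b)) v = 0) ↔ a = fun _ => false := by
    intro a b
    rw [deg_eq_zero_iff]
    constructor
    · intro h
      funext i
      have hi := h i.1 i.2
      rwa [happ a b i.1, dif_pos i.2] at hi
    · intro ha e he
      rw [happ a b e, dif_pos he, ha]
  have hdel : ∀ a b, isolCountDel (E.symm (a, b)) v
      = isolCountDel (E.symm (fun _ => false, b)) v := by
    intro a b
    apply isolCountDel_congr
    intro e he
    rw [happ, happ, dif_neg he, dif_neg he]
  have hY : ∀ b, isolCount (E.symm (fun _ => false, b))
      = isolCountDel (E.symm (fun _ => false, b)) v := by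
    intro b
    apply isolCount_eq_del
    intro e he
    rw [happ, dif_pos he]
  have hcardP : (∏ _i : {e : EdgeIdx n // incid v e}, wB p false)
      = (1 - p) ^ (n - 1) := by
    rw [Finset.prod_const, Finset.card_univ, card_incid v]
    norm_num [wB]
  rw [hsum, hsum]
  calc ∑ a, ∑ b, Wt p (E.symm (a, b))
        * (if deg (E.symm (a, b)) v = 0 then F (isolCount (E.symm (a, b))) else 0)
      = ∑ a, ∑ b, (if a = (fun _ => false) then
          (∏ i, wB p (a i)) * ((∏ i, wB p (b i))
            * F (isolCount (E.symm (a, b)))) else 0) := by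
        refine Finset.sum_congr rfl fun a _ => Finset.sum_congr rfl fun b _ => ?_
        rw [hW]
        by_cases h : a = (fun _ => false)
        · rw [if_pos ((hdeg a b).2 h), if_pos h]; ring
        · rw [if_neg (fun hh => h ((hdeg a b).1 hh)), if_neg h, mul_zero]
    _ = ∑ b, (∏ _i : {e : EdgeIdx n // incid v e}, wB p false)
        * ((∏ i, wB p (b i)) * F (isolCount (E.symm (fun _ => false, b)))) := by
        rw [Finset.sum_comm]
        refine Finset.sum_congr rfl fun b _ => ?_
        rw [Finset.sum_ite_eq' Finset.univ (fun _ => false)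
          (fun a => (∏ i, wB p (a i)) * ((∏ i, wB p (b i))
            * F (isolCount (E.symm (a, b)))))]
        simp
    _ = (1 - p) ^ (n - 1) * ∑ b, (∏ i, wB p (b i))
        * F (isolCountDel (E.symm (fun _ => false, b)) v) := by
        rw [hcardP, Finset.mul_sum]
        refine Finset.sum_congr rfl fun b _ => ?_
        rw [hY b]
    _ = (1 - p) ^ (n - 1) * ∑ a, ∑ b, Wt p (E.symm (a, b))
        * F (isolCountDel (E.symm (a, b)) v) := by
        congr 1
        have hstep : ∑ a, ∑ b, Wt p (E.symm (a, b)) * F (isolCountDel (E.symm (a, b)) v)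
            = ∑ a : {e : EdgeIdx n // incid v e} → Bool, (∏ i, wB p (a i))
              * ∑ b, (∏ i, wB p (b i))
                * F (isolCountDel (E.symm (fun _ => false, b)) v) := by
          refine Finset.sum_congr rfl fun a _ => ?_
          rw [Finset.mul_sum]
          refine Finset.sum_congr rfl fun b _ => ?_
          rw [hW, hdel a b]; ring
        rw [hstep, ← Finset.sum_mul, sum_prod_wB, one_mul]

lemma sum_deriv_ge {n : ℕ} {p : ℝ} (hp : p ∈ Set.Ioo (0 : ℝ) 1) {s : ℝ} (hs : s ≤ 0) :
    (n : ℝ) * (1 - p) ^ (n - 1) * (1 + 2 * s)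
        * ∑ ω : EdgeIdx n → Bool, Wt p ω * Real.exp (s * (isolCount ω : ℝ))
      ≤ ∑ ω : EdgeIdx n → Bool,
          Wt p ω * ((isolCount ω : ℝ) * Real.exp (s * (isolCount ω : ℝ))) := by
  classical
  have hY : ∀ ω : EdgeIdx n → Bool, (isolCount ω : ℝ)
      = ∑ v : Fin n, (if deg ω v = 0 then (1 : ℝ) else 0) := by
    intro ω
    rw [isolCount_eq_card, Finset.card_filter]
    push_cast
    rfl
  have hRHS : ∑ ω : EdgeIdx n → Bool,
        Wt p ω * ((isolCount ω : ℝ) * Real.exp (s * (isolCount ω : ℝ)))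
      = (1 - p) ^ (n - 1) * ∑ ω : EdgeIdx n → Bool, Wt p ω
          * ∑ v : Fin n, Real.exp (s * (isolCountDel ω v : ℝ)) := by
    calc ∑ ω : EdgeIdx n → Bool,
          Wt p ω * ((isolCount ω : ℝ) * Real.exp (s * (isolCount ω : ℝ)))
        = ∑ ω : EdgeIdx n → Bool, ∑ v : Fin n,
            Wt p ω * (if deg ω v = 0 then Real.exp (s * (isolCount ω : ℝ)) else 0) := by
          refine Finset.sum_congr rfl fun ω _ => ?_
          rw [hY ω, Finset.sum_mul, Finset.mul_sum]
          refine Finset.sum_congr rfl fun v _ => ?_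
          by_cases h : deg ω v = 0 <;> simp [h]
      _ = ∑ v : Fin n, ∑ ω : EdgeIdx n → Bool,
            Wt p ω * (if deg ω v = 0 then Real.exp (s * (isolCount ω : ℝ)) else 0) :=
          Finset.sum_comm
      _ = ∑ v : Fin n, (1 - p) ^ (n - 1) * ∑ ω : EdgeIdx n → Bool,
            Wt p ω * Real.exp (s * (isolCountDel ω v : ℝ)) :=
          Finset.sum_congr rfl fun v _ =>
            key_identity hp v (fun k => Real.exp (s * (k : ℝ)))
      _ = (1 - p) ^ (n - 1) * ∑ ω : EdgeIdx n → Bool, Wt p ω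
            * ∑ v : Fin n, Real.exp (s * (isolCountDel ω v : ℝ)) := by
          rw [← Finset.mul_sum]
          congr 1
          rw [Finset.sum_comm]
          exact Finset.sum_congr rfl fun ω _ => (Finset.mul_sum _ _ _).symm
  have hpt : ∀ ω : EdgeIdx n → Bool,
      (n : ℝ) * (1 + 2 * s) * Real.exp (s * (isolCount ω : ℝ))
        ≤ ∑ v : Fin n, Real.exp (s * (isolCountDel ω v : ℝ)) := by
    intro ω
    have h1 : ∀ v : Fin n,
        Real.exp (s * (isolCount ω : ℝ))
            * (1 + s * ((isolCountDel ω v : ℝ) - (isolCount ω : ℝ)))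
          ≤ Real.exp (s * (isolCountDel ω v : ℝ)) := by
      intro v
      have h2 : Real.exp (s * (isolCountDel ω v : ℝ))
          = Real.exp (s * (isolCount ω : ℝ))
            * Real.exp (s * ((isolCountDel ω v : ℝ) - (isolCount ω : ℝ))) := by
        rw [← Real.exp_add]; ring_nf
      rw [h2]
      have h3 := Real.add_one_le_exp (s * ((isolCountDel ω v : ℝ) - (isolCount ω : ℝ)))
      have h4 : (0 : ℝ) < Real.exp (s * (isolCount ω : ℝ)) := Real.exp_pos _
      nlinarith [h3, h4]
    have h5 := Finset.sum_le_sum fun v (_ : v ∈ (Finset.univ : Finset (Fin n))) => h1 v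
    have hsum2 : ∑ v : Fin n, Real.exp (s * (isolCount ω : ℝ))
          * (1 + s * ((isolCountDel ω v : ℝ) - (isolCount ω : ℝ)))
        = Real.exp (s * (isolCount ω : ℝ))
          * ((n : ℝ) + s * ((∑ v : Fin n, (isolCountDel ω v : ℝ))
              - (n : ℝ) * (isolCount ω : ℝ))) := by
      rw [← Finset.mul_sum]
      congr 1
      rw [Finset.sum_add_distrib, ← Finset.mul_sum, Finset.sum_sub_distrib]
      simp [Finset.sum_const, Finset.card_univ]
    rw [hsum2] at h5
    have hT : ((∑ v : Fin n, isolCountDel ω v : ℕ) : ℝ)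
        ≤ (n : ℝ) * (isolCount ω : ℝ) + 2 * n := by
      exact_mod_cast sum_isolCountDel_le ω
    rw [Nat.cast_sum] at hT
    have hfact : s * ((∑ v : Fin n, (isolCountDel ω v : ℝ))
        - (n : ℝ) * (isolCount ω : ℝ)) ≥ s * (2 * n) := by
      apply mul_le_mul_of_nonpos_left _ hs
      linarith
    have h4 : (0 : ℝ) < Real.exp (s * (isolCount ω : ℝ)) := Real.exp_pos _
    nlinarith [h5, hfact, h4]
  rw [hRHS]
  have hq : (0 : ℝ) ≤ (1 - p) ^ (n - 1) := pow_nonneg (by linarith [hp.2]) _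
  have step : ∑ ω : EdgeIdx n → Bool,
        Wt p ω * ((n : ℝ) * (1 + 2 * s) * Real.exp (s * (isolCount ω : ℝ)))
      ≤ ∑ ω : EdgeIdx n → Bool,
          Wt p ω * ∑ v : Fin n, Real.exp (s * (isolCountDel ω v : ℝ)) :=
    Finset.sum_le_sum fun ω _ => mul_le_mul_of_nonneg_left (hpt ω) (Wt_nonneg hp ω)
  have hL : (n : ℝ) * (1 - p) ^ (n - 1) * (1 + 2 * s)
        * ∑ ω : EdgeIdx n → Bool, Wt p ω * Real.exp (s * (isolCount ω : ℝ))
      = (1 - p) ^ (n - 1) * ∑ ω : EdgeIdx n → Bool,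
          Wt p ω * ((n : ℝ) * (1 + 2 * s) * Real.exp (s * (isolCount ω : ℝ))) := by
    rw [Finset.mul_sum, Finset.mul_sum]
    exact Finset.sum_congr rfl fun ω _ => by ring
  rw [hL]
  exact mul_le_mul_of_nonneg_left step hq

end Key
set_option maxHeartbeats 2000000 in
/-- the mgf of the standardized number of isolated vertices satisfies
`M(θ) ≤ exp (μ θ² / σ²)` for `θ ≤ 0`. -/
theorem mgf_bound_nonpos (n : ℕ) (hn : 2 ≤ n) (p : ℝ) (hp : p ∈ Set.Ioo (0 : ℝ) 1)
    (μ σ : ℝ) (hμ : μ = (n : ℝ) * (1 - p) ^ (n - 1))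
    (hσ : σ = Real.sqrt ((n : ℝ) * (1 - p) ^ (n - 1)
      * (1 + (n : ℝ) * p * (1 - p) ^ (n - 2) - (1 - p) ^ (n - 2))))
    (M : ℝ → ℝ)
    (hM : ∀ θ, M θ = ∫ ω, Real.exp (θ * ((isolCount ω : ℝ) - μ) / σ) ∂(gnp n p)) :
    ∀ θ : ℝ, θ ≤ 0 → M θ ≤ Real.exp (μ * θ ^ 2 / σ ^ 2) := by
  intro θ hθ
  obtain ⟨hp0, hp1⟩ := hp
  have hq0 : (0 : ℝ) < 1 - p := by linarith
  have hn0 : (0 : ℝ) < (n : ℝ) := by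
    have : (0 : ℕ) < n := by omega
    exact_mod_cast this
  have hμpos : 0 < μ := by rw [hμ]; positivity
  have hvar : 0 < 1 + (n : ℝ) * p * (1 - p) ^ (n - 2) - (1 - p) ^ (n - 2) := by
    have h1 : (1 - p) ^ (n - 2) ≤ 1 := pow_le_one₀ (by linarith) (by linarith)
    have h2 : 0 < (n : ℝ) * p * (1 - p) ^ (n - 2) := by positivity
    linarith
  have hσpos : 0 < σ := by
    rw [hσ]
    apply Real.sqrt_pos.2
    apply mul_pos _ hvar
    positivity
  have hσne : σ ≠ 0 := ne_of_gt hσpos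
  -- explicit representation of M and its derivative
  set M₀ : ℝ → ℝ := fun t => ∑ ω : EdgeIdx n → Bool,
    Wt p ω * Real.exp (((isolCount ω : ℝ) - μ) / σ * t) with hM₀
  set M₁ : ℝ → ℝ := fun t => ∑ ω : EdgeIdx n → Bool,
    Wt p ω * (Real.exp (((isolCount ω : ℝ) - μ) / σ * t)
      * (((isolCount ω : ℝ) - μ) / σ)) with hM₁
  have hMeq : ∀ t, M t = M₀ t := by
    intro t
    rw [hM t, integral_gnp ⟨hp0, hp1⟩]
    refine Finset.sum_congr rfl fun ω _ => ?_
    have harg : t * ((isolCount ω : ℝ) - μ) / σ = ((isolCount ω : ℝ) - μ) / σ * t := by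
      ring
    rw [harg]
  have hderiv : ∀ t, HasDerivAt M₀ (M₁ t) t := by
    intro t
    simp only [hM₀, hM₁]
    apply HasDerivAt.fun_sum
    intro ω _
    have h1 : HasDerivAt (fun y : ℝ => ((isolCount ω : ℝ) - μ) / σ * y)
        (((isolCount ω : ℝ) - μ) / σ * 1) t := (hasDerivAt_id t).const_mul _
    have h2 := (h1.exp).const_mul (Wt p ω)
    exact h2.congr_deriv (by ring)
  -- the differential inequality
  have hkey : ∀ t : ℝ, t ≤ 0 → 2 * (μ / σ ^ 2) * t * M₀ t ≤ M₁ t := by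
    intro t ht
    have hsle : t / σ ≤ 0 := div_nonpos_of_nonpos_of_nonneg ht hσpos.le
    have hsd := sum_deriv_ge (n := n) (p := p) ⟨hp0, hp1⟩ hsle
    rw [← hμ] at hsd
    have hsplit : ∀ ω : EdgeIdx n → Bool,
        Real.exp (((isolCount ω : ℝ) - μ) / σ * t)
          = Real.exp (-(t * μ / σ)) * Real.exp ((t / σ) * (isolCount ω : ℝ)) := by
      intro ω
      rw [← Real.exp_add]
      congr 1
      field_simp
      ring
    set c : ℝ := Real.exp (-(t * μ / σ)) with hc
    have hcpos : 0 < c := Real.exp_pos _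
    set A : ℝ := ∑ ω : EdgeIdx n → Bool,
      Wt p ω * Real.exp ((t / σ) * (isolCount ω : ℝ)) with hA
    set B : ℝ := ∑ ω : EdgeIdx n → Bool,
      Wt p ω * ((isolCount ω : ℝ) * Real.exp ((t / σ) * (isolCount ω : ℝ))) with hB
    have hArep : M₀ t = c * A := by
      simp only [hM₀, hA, Finset.mul_sum]
      refine Finset.sum_congr rfl fun ω _ => ?_
      rw [hsplit ω]
      ring
    have hBrep : M₁ t = c * σ⁻¹ * B - c * σ⁻¹ * μ * A := by
      have hterm : ∀ ω : EdgeIdx n → Bool,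
          Wt p ω * (Real.exp (((isolCount ω : ℝ) - μ) / σ * t)
              * (((isolCount ω : ℝ) - μ) / σ))
            = c * σ⁻¹ * (Wt p ω * ((isolCount ω : ℝ)
                * Real.exp ((t / σ) * (isolCount ω : ℝ))))
              - c * σ⁻¹ * μ * (Wt p ω * Real.exp ((t / σ) * (isolCount ω : ℝ))) := by
        intro ω
        rw [hsplit ω]
        field_simp
      calc M₁ t = ∑ ω : EdgeIdx n → Bool,
            (c * σ⁻¹ * (Wt p ω * ((isolCount ω : ℝ)
                * Real.exp ((t / σ) * (isolCount ω : ℝ))))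
              - c * σ⁻¹ * μ * (Wt p ω * Real.exp ((t / σ) * (isolCount ω : ℝ)))) :=
            Finset.sum_congr rfl fun ω _ => hterm ω
        _ = c * σ⁻¹ * B - c * σ⁻¹ * μ * A := by
            rw [Finset.sum_sub_distrib, ← Finset.mul_sum, ← Finset.mul_sum, ← hA, ← hB]
    have hsd' : μ * (1 + 2 * (t / σ)) * A ≤ B := hsd
    rw [hArep, hBrep]
    have hfac : 0 ≤ c * σ⁻¹ := le_of_lt (mul_pos hcpos (inv_pos.2 hσpos))
    have heq : 2 * (μ / σ ^ 2) * t * (c * A)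
        = c * σ⁻¹ * (μ * (1 + 2 * (t / σ)) * A) - c * σ⁻¹ * μ * A := by
      field_simp
      ring
    rw [heq]
    have hmul := mul_le_mul_of_nonneg_left hsd' hfac
    linarith
  -- monotonicity of the tilted function
  set a : ℝ := μ / σ ^ 2 with ha
  set g : ℝ → ℝ := fun t => M₀ t * Real.exp (-a * t ^ 2) with hg
  have hgderiv : ∀ t, HasDerivAt g ((M₁ t - 2 * a * t * M₀ t) * Real.exp (-a * t ^ 2)) t := by
    intro t
    have h3 : HasDerivAt (fun y : ℝ => -a * y ^ 2) (-a * (2 * t)) t := by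
      have h4 := (hasDerivAt_pow 2 t).const_mul (-a)
      simpa using h4
    have h2 := h3.exp
    have h5 := (hderiv t).fun_mul h2
    simp only [hg]
    exact h5.congr_deriv (by ring)
  have hmono : MonotoneOn g (Set.Iic 0) := by
    apply monotoneOn_of_deriv_nonneg (convex_Iic 0)
    · exact fun t _ => ((hgderiv t).differentiableAt.continuousAt).continuousWithinAt
    · exact fun t _ => (hgderiv t).differentiableAt.differentiableWithinAt
    · intro t ht
      rw [(hgderiv t).deriv]
      rw [interior_Iic, Set.mem_Iio] at ht
      have h6 := hkey t ht.le
      have h7 : 0 ≤ M₁ t - 2 * a * t * M₀ t := by rw [ha]; linarith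
      exact mul_nonneg h7 (Real.exp_pos _).le
  have hg0 : g 0 = 1 := by
    simp only [hg, hM₀, mul_zero, Real.exp_zero, mul_one, ne_eq, OfNat.ofNat_ne_zero,
      not_false_eq_true, zero_pow, neg_zero]
    exact sum_Wt_eq_one ⟨hp0, hp1⟩
  have hgθ : g θ ≤ 1 := by
    rw [← hg0]
    exact hmono (Set.mem_Iic.2 hθ) (Set.mem_Iic.2 le_rfl) hθ
  have hM₀θ : M₀ θ = g θ * Real.exp (a * θ ^ 2) := by
    simp only [hg]
    rw [mul_assoc, ← Real.exp_add]
    have hzero : -a * θ ^ 2 + a * θ ^ 2 = 0 := by ring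
    rw [hzero, Real.exp_zero, mul_one]
  rw [hMeq θ, hM₀θ]
  calc g θ * Real.exp (a * θ ^ 2) ≤ 1 * Real.exp (a * θ ^ 2) :=
        mul_le_mul_of_nonneg_right hgθ (Real.exp_pos _).le
    _ = Real.exp (μ * θ ^ 2 / σ ^ 2) := by
        rw [one_mul]
        congr 1
        rw [ha]
        ring

end ErdosRenyiIsolated
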